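/- Let C ⊆ {0,1}^n be a code and p ∈ [0,1/2] such that there exists y ∈ [0,1]^n with ‖c − y‖ ≤ p for all c ∈ C (i.e., rad(C) ≤ p). Then for every probability measure ω on {1,…,L}, the expectation over L independent uniformly chosen codewords w⁽¹⁾,…,w⁽ᴸ⁾ ∈ C of mrad_ω(w⁽¹⁾,…,w⁽ᴸ⁾) is at most τ_{Unif,p}, where τ_{Unif,p} is the expected uniform mean radius of L i.i.d. Ber(p) bit strings. -/

import Mathlib

open Finset

namespace Stmt8Aux

noncomputable def B (M : ℕ) (f : ℕ → ℝ) (q : ℝ) : ℝ :=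
  ∑ k ∈ Finset.range (M + 1), f k * (M.choose k : ℝ) * q ^ k * (1 - q) ^ (M - k)

noncomputable def wt (L : ℕ) (q : ℝ) (s : Fin L → Bool) : ℝ :=
  ∏ i, (if s i then q else 1 - q)

def Tc {L : ℕ} (s : Fin L → Bool) : ℕ := (Finset.univ.filter fun i => s i = true).card

noncomputable def fL (L : ℕ) (k : ℕ) : ℝ := ((L : ℝ) - |(L : ℝ) - 2 * k|) / (2 * L)

noncomputable def A (L : ℕ) (ω : Fin L → ℝ) (s : Fin L → Bool) : ℝ :=
  ∑ i, if s i then ω i else 0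

noncomputable def X (L : ℕ) (ω : Fin L → ℝ) (s : Fin L → Bool) : ℝ :=
  ∑ i, ω i * (if s i then -1 else 1)

noncomputable def sg (x : ℝ) : ℝ := if x < 0 then -1 else 1

lemma wt_nonneg {L : ℕ} {q : ℝ} (h0 : 0 ≤ q) (h1 : q ≤ 1) (s : Fin L → Bool) :
    0 ≤ wt L q s := by
  apply Finset.prod_nonneg
  intro i _
  split <;> linarith

lemma Tc_card_not {L : ℕ} (s : Fin L → Bool) :
    (Finset.univ.filter fun i => ¬ (s i = true)).card = L - Tc s := by
  have h := Finset.card_filter_add_card_filter_not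
    (s := (Finset.univ : Finset (Fin L))) (p := fun i => s i = true)
  simp only [Finset.card_univ, Fintype.card_fin] at h
  unfold Tc
  omega

lemma wt_eq_pow {L : ℕ} (q : ℝ) (s : Fin L → Bool) :
    wt L q s = q ^ Tc s * (1 - q) ^ (L - Tc s) := by
  classical
  rw [wt, ← Finset.prod_filter_mul_prod_filter_not Finset.univ (fun i => s i = true)]
  congr 1
  · rw [Finset.prod_congr rfl (fun i hi => ?_), Finset.prod_const, Tc]
    simp only [Finset.mem_filter, Finset.mem_univ, true_and] at hi
    simp [hi]
  · rw [Finset.prod_congr rfl (fun i hi => ?_), Finset.prod_const, Tc_card_not]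
    simp only [Finset.mem_filter, Finset.mem_univ, true_and] at hi
    simp [hi]

lemma card_fiber (L k : ℕ) :
    (Finset.univ.filter fun s : Fin L → Bool => Tc s = k).card = L.choose k := by
  classical
  have h : (Finset.univ.filter fun s : Fin L → Bool => Tc s = k).card
      = (Finset.powersetCard k (Finset.univ : Finset (Fin L))).card := by
    apply Finset.card_bij (fun s _ => Finset.univ.filter fun i => s i = true)
    · intro s hs
      simp only [Finset.mem_filter, Finset.mem_univ, true_and] at hs
      rw [Finset.mem_powersetCard]
      exact ⟨Finset.filter_subset _ _, hs⟩
    · intro s₁ h₁ s₂ h₂ h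
      funext i
      have hi := Finset.ext_iff.mp h i
      simp only [Finset.mem_filter, Finset.mem_univ, true_and] at hi
      cases hs₁ : s₁ i <;> cases hs₂ : s₂ i <;> simp [hs₁, hs₂] at hi ⊢
    · intro A hA
      rw [Finset.mem_powersetCard] at hA
      refine ⟨fun i => decide (i ∈ A), ?_, ?_⟩
      · rw [Finset.mem_filter, Tc, ← hA.2]
        refine ⟨Finset.mem_univ _, ?_⟩
        congr 1
        ext i; simp
      · ext i; simp
  rw [h, Finset.card_powersetCard, Finset.card_univ, Fintype.card_fin]

lemma Tc_le {L : ℕ} (s : Fin L → Bool) : Tc s ≤ L := by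
  classical
  calc Tc s ≤ (Finset.univ : Finset (Fin L)).card := Finset.card_filter_le _ _
  _ = L := by simp

lemma group_by_T (L : ℕ) (q : ℝ) (g : ℕ → ℝ) :
    ∑ s : Fin L → Bool, wt L q s * g (Tc s) = B L g q := by
  classical
  rw [B, ← Finset.sum_fiberwise_of_maps_to (g := fun s : Fin L → Bool => Tc s)
      (t := Finset.range (L + 1))
      (fun s _ => Finset.mem_range.mpr (Nat.lt_succ_of_le (Tc_le s)))]
  refine Finset.sum_congr rfl fun k hk => ?_
  calc ∑ s ∈ Finset.univ.filter (fun s : Fin L → Bool => Tc s = k), wt L q s * g (Tc s)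
      = ∑ _s ∈ Finset.univ.filter (fun s : Fin L → Bool => Tc s = k),
          q ^ k * (1 - q) ^ (L - k) * g k := by
        refine Finset.sum_congr rfl fun s hs => ?_
        simp only [Finset.mem_filter, Finset.mem_univ, true_and] at hs
        rw [wt_eq_pow, hs]
    _ = g k * (L.choose k : ℝ) * q ^ k * (1 - q) ^ (L - k) := by
        rw [Finset.sum_const, card_fiber, nsmul_eq_mul]; ring

lemma sum_wt (L : ℕ) (q : ℝ) : ∑ s : Fin L → Bool, wt L q s = 1 := by
  have h := group_by_T L q (fun _ => 1)
  simp only [mul_one] at h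
  rw [h]
  have h2 := add_pow q (1 - q) L
  simp only [add_sub_cancel, one_pow] at h2
  rw [B]
  calc ∑ k ∈ Finset.range (L + 1), 1 * (L.choose k : ℝ) * q ^ k * (1 - q) ^ (L - k)
      = ∑ m ∈ Finset.range (L + 1), q ^ m * (1 - q) ^ (L - m) * (L.choose m : ℝ) :=
        Finset.sum_congr rfl fun k _ => by ring
    _ = 1 := h2.symm

lemma B_symm (L : ℕ) (f : ℕ → ℝ) (hsym : ∀ k ≤ L, f (L - k) = f k) (q : ℝ) :
    B L f (1 - q) = B L f q := by
  rw [B, B, ← Finset.sum_range_reflect]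
  refine Finset.sum_congr rfl fun k hk => ?_
  rw [Finset.mem_range] at hk
  have hk' : k ≤ L := by omega
  have h1 : L + 1 - 1 - k = L - k := by omega
  rw [h1, hsym k hk', Nat.choose_symm hk', Nat.sub_sub_self hk', sub_sub_cancel]
  ring

lemma fL_symm (L : ℕ) (k : ℕ) (hk : k ≤ L) : fL L (L - k) = fL L k := by
  unfold fL
  congr 2
  rw [Nat.cast_sub hk]
  rw [show (L : ℝ) - 2 * ((L : ℝ) - k) = -((L : ℝ) - 2 * k) by ring, abs_neg]

lemma fL_eq_min (L k : ℕ) (hL : 0 < L) (hk : k ≤ L) :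
    fL L k = ((min (L - k) k : ℕ) : ℝ) / L := by
  have hL' : (0:ℝ) < L := by exact_mod_cast hL
  rcases le_or_gt (2 * k) L with h | h
  · have hm : min (L - k) k = k := min_eq_right (by omega)
    have hc : (2:ℝ) * k ≤ L := by exact_mod_cast h
    rw [hm, fL, abs_of_nonneg (by linarith)]
    field_simp
    ring
  · have hm : min (L - k) k = L - k := min_eq_left (by omega)
    have hc : (L:ℝ) ≤ 2 * k := by exact_mod_cast h.le
    rw [hm, fL, abs_of_nonpos (by linarith), Nat.cast_sub hk]
    field_simp
    ring

lemma pow_pair_le {q : ℝ} (h0 : 0 ≤ q) (h1q : q ≤ 1 - q) {a b : ℕ} (hab : a ≤ b) :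
    q ^ b * (1 - q) ^ a ≤ q ^ a * (1 - q) ^ b := by
  have h1q0 : (0:ℝ) ≤ 1 - q := le_trans h0 h1q
  have e1 : b = a + (b - a) := by omega
  rw [e1, pow_add, pow_add]
  calc q ^ a * q ^ (b - a) * (1 - q) ^ a
      = (q ^ a * (1 - q) ^ a) * q ^ (b - a) := by ring
    _ ≤ (q ^ a * (1 - q) ^ a) * (1 - q) ^ (b - a) := by
        apply mul_le_mul_of_nonneg_left (pow_le_pow_left₀ h0 h1q _)
        positivity
    _ = q ^ a * ((1 - q) ^ a * (1 - q) ^ (b - a)) := by ring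

lemma B_nonneg_of_antisym (M : ℕ) (g : ℕ → ℝ) (hanti : ∀ k ≤ M, g (M - k) = - g k)
    (hpos : ∀ k, 2 * k ≤ M → 0 ≤ g k) (q : ℝ) (h0 : 0 ≤ q) (h12 : q ≤ 1 / 2) :
    0 ≤ B M g q := by
  have h1q : q ≤ 1 - q := by linarith
  have h1q0 : (0:ℝ) ≤ 1 - q := by linarith
  have hrefl : B M g q = ∑ k ∈ Finset.range (M + 1),
      g (M - k) * (M.choose (M - k) : ℝ) * q ^ (M - k) * (1 - q) ^ (M - (M - k)) := by
    rw [B, ← Finset.sum_range_reflect]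
    refine Finset.sum_congr rfl fun k hk => ?_
    have h1 : M + 1 - 1 - k = M - k := by omega
    rw [h1]
  have key : 2 * B M g q = ∑ k ∈ Finset.range (M + 1),
      g k * (M.choose k : ℝ) * (q ^ k * (1 - q) ^ (M - k) - q ^ (M - k) * (1 - q) ^ k) := by
    have : 2 * B M g q = B M g q + B M g q := by ring
    rw [this]
    nth_rewrite 2 [hrefl]
    rw [B, ← Finset.sum_add_distrib]
    refine Finset.sum_congr rfl fun k hk => ?_
    rw [Finset.mem_range] at hk
    have hk' : k ≤ M := by omega
    rw [hanti k hk', Nat.choose_symm hk', Nat.sub_sub_self hk']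
    ring
  have hterm : ∀ k ∈ Finset.range (M + 1),
      0 ≤ g k * (M.choose k : ℝ) * (q ^ k * (1 - q) ^ (M - k) - q ^ (M - k) * (1 - q) ^ k) := by
    intro k hk
    rw [Finset.mem_range] at hk
    have hk' : k ≤ M := by omega
    have hC : (0:ℝ) ≤ (M.choose k : ℝ) := by positivity
    rcases le_or_gt (2 * k) M with h | h
    · have hgk : 0 ≤ g k := hpos k h
      have hpow : q ^ (M - k) * (1 - q) ^ k ≤ q ^ k * (1 - q) ^ (M - k) :=
        pow_pair_le h0 h1q (by omega)
      have := mul_nonneg (mul_nonneg hgk hC) (sub_nonneg.mpr hpow)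
      exact this
    · have hgk : g k ≤ 0 := by
        have h1 : g k = - g (M - k) := by
          have := hanti (M - k) (by omega)
          rw [Nat.sub_sub_self hk'] at this
          linarith [this]
        have h2 : 0 ≤ g (M - k) := hpos _ (by omega)
        linarith
      have hpow : q ^ k * (1 - q) ^ (M - k) ≤ q ^ (M - k) * (1 - q) ^ k :=
        pow_pair_le h0 h1q (by omega)
      have h1 : g k * (M.choose k : ℝ) ≤ 0 := mul_nonpos_of_nonpos_of_nonneg hgk hC
      have h2 : q ^ k * (1 - q) ^ (M - k) - q ^ (M - k) * (1 - q) ^ k ≤ 0 :=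
        sub_nonpos.mpr hpow
      nlinarith
  have : 0 ≤ 2 * B M g q := key ▸ Finset.sum_nonneg hterm
  linarith

lemma hasDerivAt_one_sub_pow (m : ℕ) (q : ℝ) :
    HasDerivAt (fun x : ℝ => (1 - x) ^ m) (-((m : ℝ) * (1 - q) ^ (m - 1))) q := by
  have h1 : HasDerivAt (fun x : ℝ => 1 - x) (-1) q := by
    simpa using (hasDerivAt_id q).const_sub (1:ℝ)
  have h2 := (hasDerivAt_pow m (1 - q)).comp q h1
  refine h2.congr_deriv ?_
  ring

lemma hasDerivAt_term (N k : ℕ) (c : ℝ) (q : ℝ) :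
    HasDerivAt (fun x : ℝ => c * x ^ k * (1 - x) ^ (N - k))
      (c * ((k : ℝ) * q ^ (k - 1)) * (1 - q) ^ (N - k)
        - c * q ^ k * (((N - k : ℕ) : ℝ) * (1 - q) ^ (N - k - 1))) q := by
  have h := ((hasDerivAt_pow k q).const_mul c).mul (hasDerivAt_one_sub_pow (N - k) q)
  refine h.congr_deriv ?_
  ring

lemma hasDerivAt_B (M : ℕ) (f : ℕ → ℝ) (q : ℝ) :
    HasDerivAt (fun x => B (M + 1) f x)
      (((M : ℝ) + 1) * B M (fun k => f (k + 1) - f k) q) q := by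
  have hterm : ∀ k ∈ Finset.range (M + 2),
      HasDerivAt (fun x : ℝ => f k * ((M+1).choose k : ℝ) * x ^ k * (1 - x) ^ (M + 1 - k))
        ((f k * ((M+1).choose k : ℝ)) * ((k : ℝ) * q ^ (k - 1)) * (1 - q) ^ (M + 1 - k)
          - (f k * ((M+1).choose k : ℝ)) * q ^ k
              * (((M + 1 - k : ℕ) : ℝ) * (1 - q) ^ (M + 1 - k - 1))) q := by
    intro k _
    exact hasDerivAt_term (M + 1) k (f k * ((M+1).choose k : ℝ)) q
  have hsum := HasDerivAt.fun_sum hterm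
  have hB : (fun x : ℝ => B (M + 1) f x)
      = fun x : ℝ => ∑ k ∈ Finset.range (M + 2),
          f k * ((M+1).choose k : ℝ) * x ^ k * (1 - x) ^ (M + 1 - k) := by
    funext x; rw [B]
  rw [hB]
  refine hsum.congr_deriv ?_
  symm
  -- now the algebraic identity
  have hS1 : ∑ k ∈ Finset.range (M + 2),
      (f k * ((M+1).choose k : ℝ)) * ((k : ℝ) * q ^ (k - 1)) * (1 - q) ^ (M + 1 - k)
      = ∑ k ∈ Finset.range (M + 1),
          f (k+1) * (((M : ℝ) + 1) * (M.choose k : ℝ)) * q ^ k * (1 - q) ^ (M - k) := by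
    rw [Finset.sum_range_succ']
    simp only [Nat.cast_zero, zero_mul, mul_zero, zero_add, add_zero]
    refine Finset.sum_congr rfl fun k hk => ?_
    have hcast : (((M+1).choose (k+1) : ℝ)) * ((k:ℝ) + 1) = ((M : ℝ) + 1) * (M.choose k : ℝ) := by
      have := Nat.add_one_mul_choose_eq M k
      have h2 : (M + 1) * M.choose k = (M + 1).choose (k + 1) * (k + 1) := by
        simpa [Nat.succ_eq_add_one] using this
      exact_mod_cast h2.symm
    have he1 : k + 1 - 1 = k := by omega
    have he2 : M + 1 - (k + 1) = M - k := by omega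
    rw [he1, he2]
    push_cast
    linear_combination (f (k+1) * q ^ k * (1 - q) ^ (M - k)) * hcast
  have hS2 : ∑ k ∈ Finset.range (M + 2),
      (f k * ((M+1).choose k : ℝ)) * q ^ k * (((M + 1 - k : ℕ) : ℝ) * (1 - q) ^ (M + 1 - k - 1))
      = ∑ k ∈ Finset.range (M + 1),
          f k * (((M : ℝ) + 1) * (M.choose k : ℝ)) * q ^ k * (1 - q) ^ (M - k) := by
    rw [Finset.sum_range_succ]
    simp only [Nat.sub_self, Nat.cast_zero, zero_mul, mul_zero, add_zero]
    refine Finset.sum_congr rfl fun k hk => ?_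
    rw [Finset.mem_range] at hk
    have hk' : k ≤ M := by omega
    have hnat : (M+1).choose k * (M + 1 - k) = (M + 1) * M.choose k := by
      have h1 := Nat.choose_succ_right_eq (M+1) k
      have h2 := Nat.add_one_mul_choose_eq M k
      have h3 : (M + 1) * M.choose k = (M + 1).choose (k + 1) * (k + 1) := by
        simpa [Nat.succ_eq_add_one] using h2
      omega
    have hcast : ((M+1).choose k : ℝ) * (((M + 1 - k : ℕ)) : ℝ) = ((M:ℝ) + 1) * (M.choose k : ℝ) := by
      exact_mod_cast hnat
    have he1 : M + 1 - k - 1 = M - k := by omega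
    rw [he1]
    linear_combination (f k * q ^ k * (1 - q) ^ (M - k)) * hcast
  rw [show (∑ k ∈ Finset.range (M + 2),
        ((f k * ((M+1).choose k : ℝ)) * ((k : ℝ) * q ^ (k - 1)) * (1 - q) ^ (M + 1 - k)
          - (f k * ((M+1).choose k : ℝ)) * q ^ k
              * (((M + 1 - k : ℕ) : ℝ) * (1 - q) ^ (M + 1 - k - 1))))
      = (∑ k ∈ Finset.range (M + 2),
          (f k * ((M+1).choose k : ℝ)) * ((k : ℝ) * q ^ (k - 1)) * (1 - q) ^ (M + 1 - k))
        - (∑ k ∈ Finset.range (M + 2),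
          (f k * ((M+1).choose k : ℝ)) * q ^ k * (((M + 1 - k : ℕ) : ℝ) * (1 - q) ^ (M + 1 - k - 1)))
      from Finset.sum_sub_distrib _ _]
  rw [hS1, hS2, B, Finset.mul_sum, ← Finset.sum_sub_distrib]
  refine Finset.sum_congr rfl fun k hk => ?_
  ring

lemma B_zero (g : ℕ → ℝ) (q : ℝ) : B 0 g q = g 0 := by
  simp [B]

lemma fL_delta_anti (M : ℕ) : ∀ k ≤ M,
    fL (M+1) ((M - k) + 1) - fL (M+1) (M - k) = - (fL (M+1) (k+1) - fL (M+1) k) := by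
  intro k hk
  have h1 : M - k + 1 = (M + 1) - k := by omega
  have h2 : M - k = (M + 1) - (k + 1) := by omega
  rw [h1, h2, fL_symm (M+1) k (by omega), fL_symm (M+1) (k+1) (by omega)]
  ring

lemma fL_delta_pos (M : ℕ) : ∀ k, 2 * k ≤ M →
    0 ≤ fL (M+1) (k+1) - fL (M+1) k := by
  intro k hk
  have hcast : 2 * (k:ℝ) + 1 ≤ (M:ℝ) + 1 := by
    have : (2:ℝ) * k ≤ (M:ℝ) := by exact_mod_cast hk
    linarith
  unfold fL
  rw [div_sub_div_same]
  apply div_nonneg _ (by positivity)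
  have h1 : |((M+1:ℕ):ℝ) - 2 * (k:ℕ)| = ((M:ℝ)+1) - 2 * k := by
    rw [abs_of_nonneg] <;> push_cast <;> linarith
  have h2 : |((M+1:ℕ):ℝ) - 2 * ((k+1:ℕ):ℝ)| ≤ ((M:ℝ)+1) - 2 * k := by
    rw [abs_le]
    constructor <;> push_cast <;> linarith
  push_cast at h1 h2 ⊢
  linarith

lemma fL_delta2_nonpos (L : ℕ) (k : ℕ) :
    (fL L (k+1+1) - fL L (k+1)) - (fL L (k+1) - fL L k) ≤ 0 := by
  have habs : |((L:ℝ) - 2*((k:ℝ)+1+1)) + ((L:ℝ) - 2*(k:ℝ))|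
      ≤ |(L:ℝ) - 2*((k:ℝ)+1+1)| + |(L:ℝ) - 2*(k:ℝ)| := abs_add_le _ _
  have h2 : |((L:ℝ) - 2*((k:ℝ)+1+1)) + ((L:ℝ) - 2*(k:ℝ))| = 2 * |(L:ℝ) - 2*((k:ℝ)+1)| := by
    rw [show ((L:ℝ) - 2*((k:ℝ)+1+1)) + ((L:ℝ) - 2*(k:ℝ)) = 2 * ((L:ℝ) - 2*((k:ℝ)+1)) by ring,
      abs_mul]
    norm_num
  unfold fL
  rw [div_sub_div_same, div_sub_div_same, div_sub_div_same]
  apply div_nonpos_of_nonpos_of_nonneg _ (by positivity)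
  push_cast
  linarith

lemma concave_G (L : ℕ) (hL : 0 < L) : ConcaveOn ℝ (Set.Icc (0:ℝ) 1) (B L (fL L)) := by
  obtain ⟨M, rfl⟩ : ∃ M, L = M + 1 := ⟨L - 1, by omega⟩
  set Δ : ℕ → ℝ := fun k => fL (M+1) (k+1) - fL (M+1) k with hΔ
  set Δ2 : ℕ → ℝ := fun k => Δ (k+1) - Δ k with hΔ2
  have hd1 : ∀ q : ℝ, HasDerivAt (B (M+1) (fL (M+1))) (((M:ℝ)+1) * B M Δ q) q :=
    fun q => hasDerivAt_B M (fL (M+1)) q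
  have hd2 : ∀ q : ℝ, HasDerivAt (fun q => ((M:ℝ)+1) * B M Δ q)
      (((M:ℝ)+1) * ((M:ℝ) * B (M-1) Δ2 q)) q := by
    intro q
    rcases Nat.eq_zero_or_pos M with hM0 | hM0
    · subst hM0
      simp only [Nat.cast_zero, zero_add, one_mul, zero_mul, mul_zero]
      have h1 : (fun q : ℝ => B 0 Δ q) = fun _ : ℝ => Δ 0 := by
        funext x; rw [B_zero]
      rw [h1]
      exact hasDerivAt_const q _
    · obtain ⟨M', rfl⟩ : ∃ M', M = M' + 1 := ⟨M - 1, by omega⟩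
      simp only [Nat.add_sub_cancel]
      have h := (hasDerivAt_B M' Δ q).const_mul (((M' + 1 : ℕ) : ℝ) + 1)
      refine h.congr_deriv ?_
      push_cast
      ring
  refine concaveOn_of_hasDerivWithinAt2_nonpos (f' := fun q => ((M:ℝ)+1) * B M Δ q)
      (f'' := fun q => ((M:ℝ)+1) * ((M:ℝ) * B (M-1) Δ2 q)) (convex_Icc 0 1)
      (fun x _ => (hd1 x).continuousAt.continuousWithinAt)
      (fun x _ => (hd1 x).hasDerivWithinAt)
      (fun x _ => (hd2 x).hasDerivWithinAt) ?_
  intro x hx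
  rw [interior_Icc] at hx
  have hx0 : (0:ℝ) ≤ x := hx.1.le
  have hx1 : x ≤ 1 := hx.2.le
  have hB : B (M-1) Δ2 x ≤ 0 := by
    rw [B]
    apply Finset.sum_nonpos
    intro k hk
    have h1 : Δ2 k ≤ 0 := fL_delta2_nonpos (M+1) k
    have hC : (0:ℝ) ≤ (((M-1).choose k : ℕ) : ℝ) := by positivity
    have hxk : (0:ℝ) ≤ x ^ k := by positivity
    have hxe : (0:ℝ) ≤ (1-x) ^ (M-1-k) := pow_nonneg (by linarith) _
    have s1 : Δ2 k * (((M-1).choose k : ℕ) : ℝ) ≤ 0 :=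
      mul_nonpos_iff.mpr (Or.inr ⟨h1, hC⟩)
    have s2 : Δ2 k * (((M-1).choose k : ℕ) : ℝ) * x ^ k ≤ 0 :=
      mul_nonpos_iff.mpr (Or.inr ⟨s1, hxk⟩)
    exact mul_nonpos_iff.mpr (Or.inr ⟨s2, hxe⟩)
  have hM : (0:ℝ) ≤ (M:ℝ) := Nat.cast_nonneg M
  have s3 : (M:ℝ) * B (M-1) Δ2 x ≤ 0 := mul_nonpos_iff.mpr (Or.inl ⟨hM, hB⟩)
  exact mul_nonpos_iff.mpr (Or.inl ⟨by positivity, s3⟩)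

lemma mono_G (L : ℕ) (hL : 0 < L) : MonotoneOn (B L (fL L)) (Set.Icc (0:ℝ) (1/2)) := by
  obtain ⟨M, rfl⟩ : ∃ M, L = M + 1 := ⟨L - 1, by omega⟩
  set Δ : ℕ → ℝ := fun k => fL (M+1) (k+1) - fL (M+1) k with hΔ
  have hd1 : ∀ q : ℝ, HasDerivAt (B (M+1) (fL (M+1))) (((M:ℝ)+1) * B M Δ q) q :=
    fun q => hasDerivAt_B M (fL (M+1)) q
  apply monotoneOn_of_deriv_nonneg (convex_Icc 0 (1/2))
  · exact fun x _ => (hd1 x).continuousAt.continuousWithinAt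
  · exact fun x _ => (hd1 x).differentiableAt.differentiableWithinAt
  · intro x hx
    rw [interior_Icc] at hx
    rw [(hd1 x).deriv]
    have hB : 0 ≤ B M Δ x :=
      B_nonneg_of_antisym M Δ (fL_delta_anti M) (fL_delta_pos M) x hx.1.le hx.2.le
    positivity

lemma sg_mul_self (x : ℝ) : x * sg x = |x| := by
  unfold sg
  rcases lt_or_ge x 0 with h | h
  · rw [if_pos h, abs_of_neg h]; ring
  · rw [if_neg (not_lt.mpr h), abs_of_nonneg h]; ring

lemma mul_sg_le (x y : ℝ) : x * sg y ≤ |x| := by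
  unfold sg
  split
  · rw [mul_neg_one]; exact neg_le_abs x
  · rw [mul_one]; exact le_abs_self x

lemma X_eq (L : ℕ) (ω : Fin L → ℝ) (s : Fin L → Bool) :
    X L ω s = (∑ i, ω i) - 2 * A L ω s := by
  unfold X A
  rw [Finset.mul_sum, ← Finset.sum_sub_distrib]
  refine Finset.sum_congr rfl fun i _ => ?_
  by_cases h : s i <;> simp [h] <;> ring

lemma A_one (L : ℕ) (s : Fin L → Bool) : A L (fun _ => 1) s = (Tc s : ℝ) := by
  unfold A Tc
  rw [Finset.sum_boole]

-- exchangeability step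

lemma V_const (L : ℕ) (q : ℝ) (i i₀ : Fin L) :
    ∑ s : Fin L → Bool, wt L q s * ((if s i then (-1:ℝ) else 1) * sg (X L (fun _ => 1) s))
      = ∑ s : Fin L → Bool, wt L q s * ((if s i₀ then (-1:ℝ) else 1) * sg (X L (fun _ => 1) s)) := by
  classical
  have hinv : Function.Involutive (fun s : Fin L → Bool => s ∘ Equiv.swap i i₀) := by
    intro s; funext k
    simp [Function.comp, Equiv.swap_apply_self]
  refine Fintype.sum_bijective _ hinv.bijective _ _ fun s => ?_
  have hwt : wt L q (s ∘ Equiv.swap i i₀) = wt L q s := by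
    unfold wt
    exact Equiv.prod_comp (Equiv.swap i i₀) fun k => if s k then q else 1 - q
  have hX : X L (fun _ => 1) (s ∘ Equiv.swap i i₀) = X L (fun _ => 1) s := by
    unfold X
    exact Equiv.sum_comp (Equiv.swap i i₀) fun k => (1:ℝ) * (if s k then -1 else 1)
  have happ : (s ∘ Equiv.swap i i₀) i₀ = s i := by
    simp [Function.comp, Equiv.swap_apply_right]
  rw [hwt, hX, happ]

lemma abs_X_ge (L : ℕ) (hL : 0 < L) (q : ℝ) (hq0 : 0 ≤ q) (hq1 : q ≤ 1)
    (ω : Fin L → ℝ) (hω0 : ∀ i, 0 ≤ ω i) (hω1 : ∑ i, ω i = 1) :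
    (1 / (L:ℝ)) * ∑ s : Fin L → Bool, wt L q s * |X L (fun _ => 1) s|
      ≤ ∑ s : Fin L → Bool, wt L q s * |X L ω s| := by
  classical
  set u : (Fin L → Bool) → ℝ := fun s => sg (X L (fun _ => 1) s) with hu
  set V : Fin L → ℝ := fun i =>
    ∑ s : Fin L → Bool, wt L q s * ((if s i then (-1:ℝ) else 1) * u s) with hV
  have i₀ : Fin L := ⟨0, hL⟩
  have hVconst : ∀ i, V i = V i₀ := fun i => V_const L q i i₀
  -- step 2 : the signed test-function sum
  have hstep2 : ∑ s : Fin L → Bool, wt L q s * (X L ω s * u s) = ∑ i, ω i * V i := by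
    have h1 : ∀ s : Fin L → Bool,
        wt L q s * (X L ω s * u s)
          = ∑ i, ω i * (wt L q s * ((if s i then (-1:ℝ) else 1) * u s)) := by
      intro s
      have h2 : X L ω s * u s = ∑ i, ω i * ((if s i then (-1:ℝ) else 1) * u s) := by
        unfold X
        rw [Finset.sum_mul]
        exact Finset.sum_congr rfl fun i _ => by ring
      rw [h2, Finset.mul_sum]
      exact Finset.sum_congr rfl fun i _ => by ring
    rw [Finset.sum_congr rfl fun s _ => h1 s, Finset.sum_comm]
    refine Finset.sum_congr rfl fun i _ => ?_
    rw [hV, Finset.mul_sum]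
  -- sum of V's
  have hsumV : ∑ i, V i = ∑ s : Fin L → Bool, wt L q s * |X L (fun _ => 1) s| := by
    rw [Finset.sum_comm]
    refine Finset.sum_congr rfl fun s _ => ?_
    have : ∑ i, wt L q s * ((if s i then (-1:ℝ) else 1) * u s)
        = wt L q s * (X L (fun _ => 1) s * u s) := by
      symm
      have h2 : X L (fun _ => 1) s * u s
          = ∑ i, (1:ℝ) * ((if s i then (-1:ℝ) else 1) * u s) := by
        unfold X
        rw [Finset.sum_mul]
        exact Finset.sum_congr rfl fun i _ => by ring
      rw [h2, Finset.mul_sum]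
      exact Finset.sum_congr rfl fun i _ => by ring
    rw [this, hu, sg_mul_self]
  have hLV : ∑ i, V i = (L:ℝ) * V i₀ := by
    rw [Finset.sum_congr rfl fun i _ => hVconst i, Finset.sum_const, Finset.card_univ,
      Fintype.card_fin, nsmul_eq_mul]
  have hVi₀ : V i₀ = (1 / (L:ℝ)) * ∑ s : Fin L → Bool, wt L q s * |X L (fun _ => 1) s| := by
    have hL' : (L:ℝ) ≠ 0 := by positivity
    rw [← hsumV, hLV]
    field_simp
  have hω : ∑ i, ω i * V i = V i₀ := by
    rw [Finset.sum_congr rfl fun i _ => by rw [hVconst i], ← Finset.sum_mul, hω1, one_mul]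
  have hfinal : ∑ s : Fin L → Bool, wt L q s * (X L ω s * u s)
      ≤ ∑ s : Fin L → Bool, wt L q s * |X L ω s| := by
    refine Finset.sum_le_sum fun s _ => ?_
    have h2 : X L ω s * u s ≤ |X L ω s| := mul_sg_le _ _
    exact mul_le_mul_of_nonneg_left h2 (wt_nonneg hq0 hq1 s)
  calc (1 / (L:ℝ)) * ∑ s : Fin L → Bool, wt L q s * |X L (fun _ => 1) s|
      = V i₀ := hVi₀.symm
    _ = ∑ i, ω i * V i := hω.symm
    _ = ∑ s : Fin L → Bool, wt L q s * (X L ω s * u s) := hstep2.symm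
    _ ≤ _ := hfinal

lemma min_eq_half (a b : ℝ) : min a b = (a + b - |a - b|) / 2 := by
  rcases le_total a b with h | h
  · rw [min_eq_left h, abs_of_nonpos (by linarith)]; ring
  · rw [min_eq_right h, abs_of_nonneg (by linarith)]; ring

lemma exp_min_le (L : ℕ) (hL : 0 < L) (q : ℝ) (hq0 : 0 ≤ q) (hq1 : q ≤ 1)
    (ω : Fin L → ℝ) (hω0 : ∀ i, 0 ≤ ω i) (hω1 : ∑ i, ω i = 1) :
    ∑ s : Fin L → Bool, wt L q s * min (A L ω s) (1 - A L ω s) ≤ B L (fL L) q := by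
  classical
  have hLr : (0:ℝ) < L := by exact_mod_cast hL
  have hmin : ∀ s : Fin L → Bool,
      min (A L ω s) (1 - A L ω s) = (1 - |X L ω s|) / 2 := by
    intro s
    rw [min_eq_half]
    have hX := X_eq L ω s
    rw [hω1] at hX
    have : A L ω s - (1 - A L ω s) = - X L ω s := by linarith
    rw [show A L ω s + (1 - A L ω s) = 1 by ring, this, abs_neg]
  have hfLs : ∀ s : Fin L → Bool,
      fL L (Tc s) = ((L:ℝ) - |X L (fun _ => 1) s|) / (2 * L) := by
    intro s
    have hX := X_eq L (fun _ => 1) s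
    simp only [Finset.sum_const, Finset.card_univ, Fintype.card_fin, nsmul_eq_mul,
      mul_one] at hX
    rw [A_one] at hX
    unfold fL
    rw [← hX]
  set S1 := ∑ s : Fin L → Bool, wt L q s * |X L ω s| with hS1
  set SU := ∑ s : Fin L → Bool, wt L q s * |X L (fun _ => 1) s| with hSU
  have hE1 : ∑ s : Fin L → Bool, wt L q s * min (A L ω s) (1 - A L ω s)
      = 1 / 2 - S1 / 2 := by
    rw [Finset.sum_congr rfl fun s _ => by rw [hmin s]]
    rw [show (fun s : Fin L → Bool => wt L q s * ((1 - |X L ω s|) / 2)) = fun s =>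
      wt L q s / 2 - (wt L q s * |X L ω s|) / 2 from funext fun s => by ring]
    rw [Finset.sum_sub_distrib, ← Finset.sum_div, ← Finset.sum_div, sum_wt, hS1]
  have hE2 : ∑ s : Fin L → Bool, wt L q s * fL L (Tc s) = 1 / 2 - SU / (2 * L) := by
    rw [Finset.sum_congr rfl fun s _ => by rw [hfLs s]]
    have hL' : (L:ℝ) ≠ 0 := ne_of_gt hLr
    rw [show (fun s : Fin L → Bool => wt L q s * (((L:ℝ) - |X L (fun _ => 1) s|) / (2 * L)))
      = fun s => wt L q s / 2 - (wt L q s * |X L (fun _ => 1) s|) / (2 * L) from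
      funext fun s => by field_simp]
    rw [Finset.sum_sub_distrib, ← Finset.sum_div, ← Finset.sum_div, sum_wt, hSU]
  have hcore := abs_X_ge L hL q hq0 hq1 ω hω0 hω1
  rw [← group_by_T, hE2, hE1]
  have : SU / (2 * L) = ((1 / (L:ℝ)) * SU) / 2 := by ring
  rw [this]
  linarith

lemma sum_fn_comp {α : Type*} [Fintype α] [DecidableEq α] {L : ℕ} (β : α → Bool)
    (Φ : (Fin L → Bool) → ℝ) :
    ∑ w : Fin L → α, Φ (fun i => β (w i))
      = ∑ s : Fin L → Bool,
          (∏ i, ((Finset.univ.filter fun c => β c = s i).card : ℝ)) * Φ s := by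
  classical
  rw [← Finset.sum_fiberwise_of_maps_to (g := fun w : Fin L → α => fun i => β (w i))
    (t := (Finset.univ : Finset (Fin L → Bool))) (fun w _ => Finset.mem_univ _)
    (f := fun w => Φ (fun i => β (w i)))]
  refine Finset.sum_congr rfl fun s _ => ?_
  have hfib : Finset.univ.filter (fun w : Fin L → α => (fun i => β (w i)) = s)
      = Fintype.piFinset (fun i => Finset.univ.filter fun c => β c = s i) := by
    ext w
    simp only [Finset.mem_filter, Finset.mem_univ, true_and, Fintype.mem_piFinset,
      funext_iff]
  calc ∑ w ∈ Finset.univ.filter (fun w : Fin L → α => (fun i => β (w i)) = s),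
        Φ (fun i => β (w i))
      = ∑ w ∈ Finset.univ.filter (fun w : Fin L → α => (fun i => β (w i)) = s), Φ s := by
        refine Finset.sum_congr rfl fun w hw => ?_
        simp only [Finset.mem_filter] at hw
        rw [hw.2]
    _ = _ := by
        rw [Finset.sum_const, hfib, Fintype.card_piFinset, nsmul_eq_mul]
        push_cast
        ring

end Stmt8Aux

open Stmt8Aux

/-- if a binary code `C` has radius at most `p ≤ 1/2`, then for any
probability measure `ω` on `{1,…,L}`, the expected mean radius of `L`
independent uniform codewords is at most `τ_{Unif,p}`, the expected uniform mean
radius of `L` i.i.d. `Ber(p)` strings (here `s i = true` encodes bit `1`). -/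
theorem stmt_8 (n L : ℕ) (hn : 0 < n) (hL : 0 < L)
    (C : Finset (Fin n → ℝ)) (hCne : C.Nonempty)
    (hbin : ∀ c ∈ C, ∀ j, c j = 0 ∨ c j = 1)
    (p : ℝ) (hp0 : 0 ≤ p) (hp : p ≤ 1 / 2)
    (hrad : ∃ y : Fin n → ℝ, (∀ j, 0 ≤ y j ∧ y j ≤ 1) ∧
      ∀ c ∈ C, (1 / n : ℝ) * ∑ j, |c j - y j| ≤ p)
    (ω : Fin L → ℝ) (hω0 : ∀ i, 0 ≤ ω i) (hω1 : ∑ i, ω i = 1) :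
    (1 / (C.card : ℝ) ^ L) * ∑ w : Fin L → {c // c ∈ C},
        (⨅ y : {y : Fin n → ℝ // ∀ j, 0 ≤ y j ∧ y j ≤ 1},
          ∑ i, ω i * ((1 / n : ℝ) * ∑ j, |(w i : Fin n → ℝ) j - y.1 j|))
      ≤ ∑ s : Fin L → Bool, (∏ i, if s i then p else 1 - p) *
          ((min (Finset.univ.filter fun i => s i = false).card
                (Finset.univ.filter fun i => s i = true).card : ℕ) : ℝ) / L := by
  classical
  obtain ⟨y₀, hy₀, hrad'⟩ := hrad
  have hC0 : 0 < C.card := hCne.card_pos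
  have hCr : (0:ℝ) < (C.card : ℝ) := by exact_mod_cast hC0
  have hCne0 : (C.card : ℝ) ≠ 0 := hCr.ne'
  have hnr : (0:ℝ) < (n : ℝ) := by exact_mod_cast hn
  set β : Fin n → {c // c ∈ C} → Bool :=
    fun j c => if (c : Fin n → ℝ) j = 1 then true else false with hβ
  have hbit : ∀ (c : {c // c ∈ C}) (j : Fin n),
      (c : Fin n → ℝ) j = (if β j c then (1:ℝ) else 0) := by
    intro c j
    rcases hbin c c.2 j with h | h
    · simp [hβ, h]
    · simp [hβ, h]
  set N : Fin n → ℕ :=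
    fun j => (Finset.univ.filter fun c : {c // c ∈ C} => β j c = true).card with hN
  set q : Fin n → ℝ := fun j => (N j : ℝ) / (C.card : ℝ) with hq
  have hNle : ∀ j, N j ≤ C.card := by
    intro j
    calc N j ≤ (Finset.univ : Finset {c // c ∈ C}).card := Finset.card_filter_le _ _
      _ = C.card := by rw [Finset.card_univ, Fintype.card_coe]
  have hq0 : ∀ j, 0 ≤ q j := fun j => by rw [hq]; exact div_nonneg (Nat.cast_nonneg _) (Nat.cast_nonneg _)
  have hq1 : ∀ j, q j ≤ 1 := by
    intro j
    rw [hq]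
    rw [div_le_one hCr]
    exact_mod_cast hNle j
  have hNnot : ∀ j, ((Finset.univ.filter fun c : {c // c ∈ C} => ¬ (β j c = true)).card : ℝ)
      = (C.card : ℝ) - N j := by
    intro j
    have h := Finset.card_filter_add_card_filter_not
      (s := (Finset.univ : Finset {c // c ∈ C})) (p := fun c => β j c = true)
    rw [Finset.card_univ, Fintype.card_coe] at h
    have h2 : (Finset.univ.filter fun c : {c // c ∈ C} => ¬ (β j c = true)).card
        = C.card - N j := by
      have hNj : N j = (Finset.univ.filter fun c : {c // c ∈ C} => β j c = true).card := rfl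
      omega
    rw [h2, Nat.cast_sub (hNle j)]
  -- step 1 : bound each infimum
  have key1 : ∀ w : Fin L → {c // c ∈ C},
      (⨅ y : {y : Fin n → ℝ // ∀ j, 0 ≤ y j ∧ y j ≤ 1},
          ∑ i, ω i * ((1 / n : ℝ) * ∑ j, |(w i : Fin n → ℝ) j - y.1 j|))
        ≤ (1 / n : ℝ) * ∑ j, min (A L ω fun i => β j (w i))
            (1 - A L ω fun i => β j (w i)) := by
    intro w
    set Y : Fin n → ℝ := fun j =>
      if 2 * A L ω (fun i => β j (w i)) ≤ 1 then 0 else 1 with hY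
    have hYmem : ∀ j, 0 ≤ Y j ∧ Y j ≤ 1 := by
      intro j; rw [hY]; dsimp only; split <;> norm_num
    have hBdd : BddBelow (Set.range fun y : {y : Fin n → ℝ // ∀ j, 0 ≤ y j ∧ y j ≤ 1} =>
        ∑ i, ω i * ((1 / n : ℝ) * ∑ j, |(w i : Fin n → ℝ) j - y.1 j|)) := by
      refine ⟨0, fun v hv => ?_⟩
      obtain ⟨y, rfl⟩ := hv
      refine Finset.sum_nonneg fun i _ => ?_
      refine mul_nonneg (hω0 i) (mul_nonneg (by positivity) ?_)
      exact Finset.sum_nonneg fun j _ => abs_nonneg _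
    refine le_trans (ciInf_le hBdd ⟨Y, hYmem⟩) (le_of_eq ?_)
    have hval : ∀ j, ∑ i, ω i * |(w i : Fin n → ℝ) j - Y j|
        = min (A L ω fun i => β j (w i)) (1 - A L ω fun i => β j (w i)) := by
      intro j
      rw [hY]; dsimp only
      by_cases hc : 2 * A L ω (fun i => β j (w i)) ≤ 1
      · rw [if_pos hc, min_eq_left (by linarith)]
        unfold A
        refine Finset.sum_congr rfl fun i _ => ?_
        rw [hbit (w i) j]
        by_cases hb : β j (w i) <;> simp [hb]
      · rw [if_neg hc, min_eq_right (by linarith)]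
        have h1 : ∑ i, ω i * |(w i : Fin n → ℝ) j - 1|
            = ∑ i, (ω i - if β j (w i) then ω i else 0) := by
          refine Finset.sum_congr rfl fun i _ => ?_
          rw [hbit (w i) j]
          by_cases hb : β j (w i) <;> simp [hb]
        rw [h1, Finset.sum_sub_distrib, hω1]
        rfl
    calc ∑ i, ω i * ((1 / n : ℝ) * ∑ j, |(w i : Fin n → ℝ) j - Y j|)
        = ∑ i, ∑ j, (1 / n : ℝ) * (ω i * |(w i : Fin n → ℝ) j - Y j|) := by
          refine Finset.sum_congr rfl fun i _ => ?_
          rw [Finset.mul_sum, Finset.mul_sum]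
          exact Finset.sum_congr rfl fun j _ => by ring
      _ = ∑ j, ∑ i, (1 / n : ℝ) * (ω i * |(w i : Fin n → ℝ) j - Y j|) := Finset.sum_comm
      _ = (1 / n : ℝ) * ∑ j, ∑ i, ω i * |(w i : Fin n → ℝ) j - Y j| := by
          rw [Finset.mul_sum]
          refine Finset.sum_congr rfl fun j _ => ?_
          rw [Finset.mul_sum]
      _ = _ := by rw [Finset.sum_congr rfl fun j _ => hval j]
  -- step 2 : per coordinate expectation
  have key2 : ∀ j, (1 / (C.card : ℝ) ^ L) * ∑ w : Fin L → {c // c ∈ C},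
      min (A L ω fun i => β j (w i)) (1 - A L ω fun i => β j (w i))
        ≤ B L (fL L) (q j) := by
    intro j
    have hcomp := sum_fn_comp (β j)
      (fun s : Fin L → Bool => min (A L ω s) (1 - A L ω s))
    rw [hcomp, Finset.mul_sum]
    have hwt : ∀ s : Fin L → Bool,
        (1 / (C.card : ℝ) ^ L) * (∏ i, ((Finset.univ.filter fun c => β j c = s i).card : ℝ))
          = wt L (q j) s := by
      intro s
      have h1 : (1 / (C.card : ℝ) ^ L) * (∏ i, ((Finset.univ.filter fun c => β j c = s i).card : ℝ))
          = ∏ i : Fin L, (((Finset.univ.filter fun c => β j c = s i).card : ℝ) / (C.card : ℝ)) := by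
        rw [Finset.prod_div_distrib, Finset.prod_const, Finset.card_univ, Fintype.card_fin]
        ring
      rw [h1]
      unfold wt
      refine Finset.prod_congr rfl fun i _ => ?_
      by_cases hb : s i
      · rw [if_pos hb, hq]
        have : (Finset.univ.filter fun c : {c // c ∈ C} => β j c = s i)
            = Finset.univ.filter fun c => β j c = true := by
          refine Finset.filter_congr fun c _ => by rw [hb]
        rw [this, hN]
      · rw [if_neg hb]
        have hb' : s i = false := by simpa using hb
        have h2 : (Finset.univ.filter fun c : {c // c ∈ C} => β j c = s i)
            = Finset.univ.filter fun c => ¬ (β j c = true) := by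
          refine Finset.filter_congr fun c _ => by rw [hb']; simp
        rw [h2, hNnot j, hq]
        field_simp
    calc ∑ s : Fin L → Bool, (1 / (C.card : ℝ) ^ L) *
          ((∏ i, ((Finset.univ.filter fun c => β j c = s i).card : ℝ)) *
            min (A L ω s) (1 - A L ω s))
        = ∑ s : Fin L → Bool, wt L (q j) s * min (A L ω s) (1 - A L ω s) := by
          refine Finset.sum_congr rfl fun s _ => ?_
          rw [← hwt s]
          ring
      _ ≤ B L (fL L) (q j) := exp_min_le L hL (q j) (hq0 j) (hq1 j) ω hω0 hω1
  -- step 3 : full chain up to the q's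
  have main1 : (1 / (C.card : ℝ) ^ L) * (∑ w : Fin L → {c // c ∈ C},
        ⨅ y : {y : Fin n → ℝ // ∀ j, 0 ≤ y j ∧ y j ≤ 1},
          ∑ i, ω i * ((1 / n : ℝ) * ∑ j, |(w i : Fin n → ℝ) j - y.1 j|))
      ≤ ∑ j, (1 / (n:ℝ)) * B L (fL L) (q j) := by
    have h1 : (∑ w : Fin L → {c // c ∈ C},
        ⨅ y : {y : Fin n → ℝ // ∀ j, 0 ≤ y j ∧ y j ≤ 1},
          ∑ i, ω i * ((1 / n : ℝ) * ∑ j, |(w i : Fin n → ℝ) j - y.1 j|))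
        ≤ ∑ w : Fin L → {c // c ∈ C}, (1 / n : ℝ) * ∑ j,
            min (A L ω fun i => β j (w i)) (1 - A L ω fun i => β j (w i)) :=
      Finset.sum_le_sum fun w _ => key1 w
    have h2 : ∑ w : Fin L → {c // c ∈ C}, (1 / n : ℝ) * ∑ j,
          min (A L ω fun i => β j (w i)) (1 - A L ω fun i => β j (w i))
        = ∑ j, (1 / (n:ℝ)) * ∑ w : Fin L → {c // c ∈ C},
            min (A L ω fun i => β j (w i)) (1 - A L ω fun i => β j (w i)) := by
      rw [← Finset.mul_sum, Finset.sum_comm, Finset.mul_sum]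
    calc (1 / (C.card : ℝ) ^ L) * (∑ w : Fin L → {c // c ∈ C},
          ⨅ y : {y : Fin n → ℝ // ∀ j, 0 ≤ y j ∧ y j ≤ 1},
            ∑ i, ω i * ((1 / n : ℝ) * ∑ j, |(w i : Fin n → ℝ) j - y.1 j|))
        ≤ (1 / (C.card : ℝ) ^ L) * ∑ j, (1 / (n:ℝ)) * ∑ w : Fin L → {c // c ∈ C},
            min (A L ω fun i => β j (w i)) (1 - A L ω fun i => β j (w i)) := by
          rw [← h2]
          exact mul_le_mul_of_nonneg_left h1 (one_div_nonneg.mpr (pow_nonneg hCr.le _))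
      _ = ∑ j, (1 / (n:ℝ)) * ((1 / (C.card : ℝ) ^ L) * ∑ w : Fin L → {c // c ∈ C},
            min (A L ω fun i => β j (w i)) (1 - A L ω fun i => β j (w i))) := by
          rw [Finset.mul_sum]
          exact Finset.sum_congr rfl fun j _ => by ring
      _ ≤ ∑ j, (1 / (n:ℝ)) * B L (fL L) (q j) :=
          Finset.sum_le_sum fun j _ => mul_le_mul_of_nonneg_left (key2 j) (by positivity)
  -- step 4 : symmetrize, Jensen, monotonicity
  set r : Fin n → ℝ := fun j => min (q j) (1 - q j) with hr
  have hr0 : ∀ j, 0 ≤ r j := fun j => le_min (hq0 j) (by linarith [hq1 j])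
  have hr12 : ∀ j, r j ≤ 1/2 := by
    intro j
    rcases le_total (q j) (1 - q j) with h | h
    · rw [hr]; dsimp only; rw [min_eq_left h]; linarith
    · rw [hr]; dsimp only; rw [min_eq_right h]; linarith
  have hGqr : ∀ j, B L (fL L) (q j) = B L (fL L) (r j) := by
    intro j
    rcases le_total (q j) (1 - q j) with h | h
    · rw [hr]; dsimp only; rw [min_eq_left h]
    · rw [hr]; dsimp only; rw [min_eq_right h]
      exact (B_symm L (fL L) (fun k hk => fL_symm L k hk) (q j)).symm
  have hJ : ∑ j, (1 / (n:ℝ)) * B L (fL L) (r j)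
      ≤ B L (fL L) (∑ j, (1 / (n:ℝ)) * r j) := by
    have h := (concave_G L hL).le_map_sum (t := Finset.univ)
      (w := fun _ : Fin n => 1 / (n:ℝ)) (p := r)
      (fun j _ => by positivity)
      (by rw [Finset.sum_const, Finset.card_univ, Fintype.card_fin, nsmul_eq_mul]; field_simp)
      (fun j _ => ⟨hr0 j, by linarith [hr12 j]⟩)
    simpa [smul_eq_mul] using h
  -- the radius bound
  have hradj : ∀ j, (C.card : ℝ) * r j ≤ ∑ c ∈ C, |c j - y₀ j| := by
    intro j
    have h1 : ∀ c : {c // c ∈ C},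
        |(c : Fin n → ℝ) j - y₀ j| = if β j c then 1 - y₀ j else y₀ j := by
      intro c
      rw [hbit c j]
      by_cases hb : β j c
      · rw [if_pos hb, if_pos hb, abs_of_nonneg (by linarith [(hy₀ j).2])]
      · rw [if_neg hb, if_neg hb,
          show (0:ℝ) - y₀ j = -(y₀ j) by ring, abs_neg, abs_of_nonneg (hy₀ j).1]
    have hsum : ∑ c ∈ C, |c j - y₀ j|
        = (N j : ℝ) * (1 - y₀ j) + ((C.card : ℝ) - N j) * y₀ j := by
      rw [← Finset.sum_coe_sort C (fun c => |c j - y₀ j|)]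
      rw [Finset.sum_congr rfl fun c _ => h1 c, Finset.sum_ite, Finset.sum_const,
        Finset.sum_const, nsmul_eq_mul, nsmul_eq_mul, hNnot j]
    have hNq : (N j : ℝ) = (C.card : ℝ) * q j := by
      rw [hq]; field_simp
    rw [hsum, hNq]
    have h2 : r j ≤ q j := min_le_left _ _
    have h3 : r j ≤ 1 - q j := min_le_right _ _
    have hy1 := (hy₀ j).1
    have hy2 := (hy₀ j).2
    nlinarith [mul_nonneg (mul_nonneg hCr.le (sub_nonneg.mpr h2)) (sub_nonneg.mpr hy2),
      mul_nonneg (mul_nonneg hCr.le (sub_nonneg.mpr h3)) hy1]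
  have hsumr : ∑ j, r j ≤ (n:ℝ) * p := by
    have h1 : ∑ j, (C.card:ℝ) * r j ≤ ∑ j, ∑ c ∈ C, |c j - y₀ j| :=
      Finset.sum_le_sum fun j _ => hradj j
    have h2 : ∑ j, ∑ c ∈ C, |c j - y₀ j| = ∑ c ∈ C, ∑ j, |c j - y₀ j| := Finset.sum_comm
    have h3 : ∑ c ∈ C, ∑ j, |c j - y₀ j| ≤ ∑ c ∈ C, (n:ℝ) * p := by
      refine Finset.sum_le_sum fun c hc => ?_
      have h4 := hrad' c hc
      have h5 : (n:ℝ) * ((1/(n:ℝ)) * ∑ j, |c j - y₀ j|) ≤ (n:ℝ) * p :=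
        mul_le_mul_of_nonneg_left h4 hnr.le
      have h6 : (n:ℝ) * ((1/(n:ℝ)) * ∑ j, |c j - y₀ j|) = ∑ j, |c j - y₀ j| := by
        field_simp
      linarith
    have h7 : ∑ c ∈ C, (n:ℝ) * p = (C.card:ℝ) * ((n:ℝ) * p) := by
      rw [Finset.sum_const, nsmul_eq_mul]
    have h8 : (C.card:ℝ) * ∑ j, r j ≤ (C.card:ℝ) * ((n:ℝ) * p) := by
      rw [Finset.mul_sum]
      linarith
    exact le_of_mul_le_mul_left h8 hCr
  have hrbarp : ∑ j, (1 / (n:ℝ)) * r j ≤ p := by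
    rw [← Finset.mul_sum]
    have h1 : (1/(n:ℝ)) * ∑ j, r j ≤ (1/(n:ℝ)) * ((n:ℝ) * p) :=
      mul_le_mul_of_nonneg_left hsumr (by positivity)
    have h2 : (1/(n:ℝ)) * ((n:ℝ) * p) = p := by field_simp
    linarith
  have hrbar0 : 0 ≤ ∑ j, (1 / (n:ℝ)) * r j :=
    Finset.sum_nonneg fun j _ => mul_nonneg (by positivity) (hr0 j)
  have hrbar12 : ∑ j, (1 / (n:ℝ)) * r j ≤ 1/2 := by
    calc ∑ j, (1 / (n:ℝ)) * r j ≤ ∑ j : Fin n, (1 / (n:ℝ)) * (1/2) :=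
        Finset.sum_le_sum fun j _ => mul_le_mul_of_nonneg_left (hr12 j) (by positivity)
      _ = 1/2 := by
        rw [Finset.sum_const, Finset.card_univ, Fintype.card_fin, nsmul_eq_mul]
        field_simp
  have hmono : B L (fL L) (∑ j, (1 / (n:ℝ)) * r j) ≤ B L (fL L) p :=
    mono_G L hL ⟨hrbar0, hrbar12⟩ ⟨hp0, hp⟩ hrbarp
  -- final identification of the RHS
  have hfinal : B L (fL L) p
      = ∑ s : Fin L → Bool, (∏ i, if s i then p else 1 - p) *
          ((min (Finset.univ.filter fun i => s i = false).card
                (Finset.univ.filter fun i => s i = true).card : ℕ) : ℝ) / L := by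
    rw [← group_by_T L p (fL L)]
    refine Finset.sum_congr rfl fun s _ => ?_
    have hF : (Finset.univ.filter fun i : Fin L => s i = false)
        = Finset.univ.filter fun i : Fin L => ¬ (s i = true) := by
      refine Finset.filter_congr fun i _ => by simp
    rw [hF, Tc_card_not]
    rw [fL_eq_min L (Tc s) hL (Tc_le s)]
    unfold wt Tc
    rw [mul_div_assoc]
  calc (1 / (C.card : ℝ) ^ L) * ∑ w : Fin L → {c // c ∈ C},
        (⨅ y : {y : Fin n → ℝ // ∀ j, 0 ≤ y j ∧ y j ≤ 1},
          ∑ i, ω i * ((1 / n : ℝ) * ∑ j, |(w i : Fin n → ℝ) j - y.1 j|))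
      ≤ ∑ j, (1 / (n:ℝ)) * B L (fL L) (q j) := main1
    _ = ∑ j, (1 / (n:ℝ)) * B L (fL L) (r j) :=
        Finset.sum_congr rfl fun j _ => by rw [hGqr j]
    _ ≤ B L (fL L) (∑ j, (1 / (n:ℝ)) * r j) := hJ
    _ ≤ B L (fL L) p := hmono
    _ = _ := hfinal
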